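/- The Catalan numbers satisfy the integral representation C_n = ∫_0^4 x^n · (1/(2π))·√((4−x)/x) dx for all n ∈ ℕ; in particular, the Catalan numbers form a Hausdorff moment sequence on [0,4]. -/

import Mathlib

open MeasureTheory Real Nat

/-- `y` is a `K`-moment sequence. -/
def IsMomentSeqOn (K : Set ℝ) (y : ℕ → ℝ) : Prop :=
  ∃ μ : Measure ℝ, μ Kᶜ = 0 ∧
    ∀ n : ℕ, Integrable (fun x : ℝ => x ^ n) μ ∧ y n = ∫ x, x ^ n ∂μ

lemma gamma_half (n : ℕ) : Real.Gamma (n + 1/2) = Real.sqrt π * (2*n)! / (4^n * n !) := by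
  induction n with
  | zero =>
    rw [show ((0:ℕ):ℝ) + 1/2 = 1/2 by norm_num, Real.Gamma_one_half_eq]
    norm_num
  | succ n ih =>
    have h : (((n:ℕ)+1 : ℝ) + 1/2) = ((n:ℝ) + 1/2) + 1 := by push_cast; ring
    push_cast
    rw [h, Real.Gamma_add_one (by positivity), ih]
    have h4 : (0:ℝ) < 4 ^ n := by positivity
    have hf : (0:ℝ) < (n ! : ℝ) := by positivity
    have e1 : (2*(n+1))! = (2*n+2) * ((2*n+1) * (2*n)!) := by
      rw [show 2*(n+1) = 2*n+1+1 from by ring, Nat.factorial_succ, Nat.factorial_succ]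
    have e2 : ((n:ℕ)+1)! = (n+1) * n ! := Nat.factorial_succ n
    rw [e1, e2]
    field_simp
    push_cast; ring

lemma beta_real (n : ℕ) :
    ∫ t in (0:ℝ)..1, t ^ ((n:ℝ) - 1/2) * (1-t) ^ ((1:ℝ)/2) =
      Real.Gamma (n + 1/2) * Real.Gamma (3/2) / Real.Gamma (n + 2) := by
  set u : ℂ := (n : ℂ) + 1/2 with hu_def
  set v : ℂ := 3/2 with hv_def
  have hu : 0 < u.re := by simp [u]; positivity
  have hv : 0 < v.re := by norm_num [v]
  have hbeta := Complex.Gamma_mul_Gamma_eq_betaIntegral hu hv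
  have e1 : u - 1 = (((n:ℝ) - 1/2 : ℝ) : ℂ) := by push_cast [u]; ring
  have e2 : v - 1 = (((1:ℝ)/2 : ℝ) : ℂ) := by push_cast [v]; ring
  have hB : Complex.betaIntegral u v =
      ((∫ t in (0:ℝ)..1, t ^ ((n:ℝ) - 1/2) * (1-t) ^ ((1:ℝ)/2) : ℝ) : ℂ) := by
    rw [Complex.betaIntegral, ← intervalIntegral.integral_ofReal]
    refine intervalIntegral.integral_congr fun x hx => ?_
    rw [Set.uIcc_of_le (by norm_num : (0:ℝ) ≤ 1)] at hx
    rw [e1, e2, ← Complex.ofReal_cpow hx.1,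
      ← Complex.ofReal_one, ← Complex.ofReal_sub,
      ← Complex.ofReal_cpow (by linarith [hx.2] : (0:ℝ) ≤ 1 - x)]
    push_cast
    ring
  have huv : u + v = (((n : ℝ) + 2 : ℝ) : ℂ) := by push_cast [u, v]; ring
  have hgu : Complex.Gamma u = ((Real.Gamma (n + 1/2) : ℝ) : ℂ) := by
    rw [show u = (((n : ℝ) + 1/2 : ℝ) : ℂ) by push_cast [u]; ring, Complex.Gamma_ofReal]
  have hgv : Complex.Gamma v = ((Real.Gamma (3/2) : ℝ) : ℂ) := by
    rw [show v = (((3:ℝ)/2 : ℝ) : ℂ) by push_cast [v]; ring, Complex.Gamma_ofReal]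
  have hguv : Complex.Gamma (u + v) = ((Real.Gamma (n + 2) : ℝ) : ℂ) := by
    rw [huv, Complex.Gamma_ofReal]
  rw [hgu, hgv, hguv, hB, ← Complex.ofReal_mul, ← Complex.ofReal_mul] at hbeta
  have hre : Real.Gamma (n + 1/2) * Real.Gamma (3/2)
      = Real.Gamma (n + 2) * ∫ t in (0:ℝ)..1, t ^ ((n:ℝ) - 1/2) * (1-t) ^ ((1:ℝ)/2) :=
    Complex.ofReal_injective hbeta
  have hpos : 0 < Real.Gamma (n + 2) := Real.Gamma_pos_of_pos (by positivity)
  rw [eq_div_iff hpos.ne']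
  rw [hre]; ring

lemma ne_half (n : ℕ) : (n:ℝ) - 1/2 ≠ 0 := by
  intro h
  have h1 : ((2*n : ℕ) : ℝ) = ((1:ℕ):ℝ) := by push_cast; linarith
  have := Nat.cast_injective (R := ℝ) h1
  omega

lemma step_a (n : ℕ) :
    ∫ x in (0:ℝ)..4, x ^ n * Real.sqrt ((4 - x) / x)
      = ∫ x in (0:ℝ)..4, x ^ ((n:ℝ) - 1/2) * (4 - x) ^ ((1:ℝ)/2) := by
  refine intervalIntegral.integral_congr fun x hx => ?_
  rw [Set.uIcc_of_le (by norm_num : (0:ℝ) ≤ 4)] at hx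
  rcases eq_or_lt_of_le hx.1 with h0 | h0
  · rw [← h0, Real.zero_rpow (ne_half n), zero_mul]
    simp
  · have h4 : (0:ℝ) ≤ 4 - x := by linarith [hx.2]
    rw [Real.sqrt_eq_rpow, Real.div_rpow h4 h0.le, ← Real.rpow_natCast x n,
      Real.rpow_sub h0]
    field_simp

lemma step_b (n : ℕ) :
    ∫ x in (0:ℝ)..4, x ^ ((n:ℝ) - 1/2) * (4 - x) ^ ((1:ℝ)/2)
      = 4 ^ (n+1) * ∫ t in (0:ℝ)..1, t ^ ((n:ℝ) - 1/2) * (1-t) ^ ((1:ℝ)/2) := by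
  have h := intervalIntegral.integral_comp_mul_left
    (fun x => x ^ ((n:ℝ) - 1/2) * (4 - x) ^ ((1:ℝ)/2)) (by norm_num : (4:ℝ) ≠ 0)
    (a := 0) (b := 1)
  simp only [mul_zero, mul_one, smul_eq_mul] at h
  have hcongr : ∫ t in (0:ℝ)..1, (4*t) ^ ((n:ℝ) - 1/2) * (4 - 4*t) ^ ((1:ℝ)/2)
      = ∫ t in (0:ℝ)..1, (4:ℝ)^(n:ℕ) * (t ^ ((n:ℝ) - 1/2) * (1-t) ^ ((1:ℝ)/2)) := by
    refine intervalIntegral.integral_congr fun t ht => ?_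
    rw [Set.uIcc_of_le (by norm_num : (0:ℝ) ≤ 1)] at ht
    have h1t : (0:ℝ) ≤ 1 - t := by linarith [ht.2]
    rw [show (4:ℝ) - 4*t = 4 * (1-t) by ring,
      Real.mul_rpow (by norm_num) ht.1, Real.mul_rpow (by norm_num) h1t]
    rw [show (4:ℝ)^((n:ℝ)-1/2) * t^((n:ℝ)-1/2) * ((4:ℝ)^((1:ℝ)/2) * (1-t)^((1:ℝ)/2))
        = ((4:ℝ)^((n:ℝ)-1/2) * (4:ℝ)^((1:ℝ)/2)) * (t^((n:ℝ)-1/2) * (1-t)^((1:ℝ)/2)) by ring,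
      ← Real.rpow_add (by norm_num : (0:ℝ) < 4),
      show (n:ℝ) - 1/2 + 1/2 = (n:ℝ) by ring, Real.rpow_natCast]
  rw [hcongr, intervalIntegral.integral_const_mul] at h
  rw [pow_succ]
  linarith [h]

lemma key (n : ℕ) :
    ∫ x in (0:ℝ)..4, x ^ n * Real.sqrt ((4 - x) / x) = 2 * π * catalan n := by
  rw [step_a, step_b, beta_real, gamma_half]
  have h32 : Real.Gamma (3/2) = Real.sqrt π / 2 := by
    rw [show (3/2 : ℝ) = 1/2 + 1 by norm_num, Real.Gamma_add_one (by norm_num),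
      Real.Gamma_one_half_eq]
    ring
  have hG2 : Real.Gamma ((n:ℝ) + 2) = ((n+1)! : ℕ) := by
    rw [show ((n:ℝ)+2) = ((n+1:ℕ):ℝ) + 1 by push_cast; ring, Real.Gamma_nat_eq_factorial]
  have hcat : ((2*n)! : ℝ) = ((n+1) * catalan n * (n ! * n !) : ℕ) := by
    congr 1
    rw [succ_mul_catalan_eq_centralBinom, Nat.centralBinom,
      ← Nat.choose_mul_factorial_mul_factorial (Nat.le_mul_of_pos_left n (by norm_num)),
      show 2*n - n = n by omega]
    ring
  rw [h32, hG2, hcat]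
  have h1 : (0:ℝ) < 4^n := by positivity
  have h2 : (0:ℝ) < (n ! : ℝ) := by positivity
  have h3 : ((n+1)! : ℝ) = (n+1) * n ! := by exact_mod_cast Nat.factorial_succ n
  set s := Real.sqrt π with hs
  have hπ : π = s ^ 2 := (Real.sq_sqrt Real.pi_pos.le).symm
  push_cast [h3]
  rw [hπ]
  field_simp
  ring

lemma integrable_main (n : ℕ) :
    IntervalIntegrable (fun x => x ^ n * (1 / (2 * π) * Real.sqrt ((4 - x) / x)))
      volume 0 4 := by
  have hg : IntervalIntegrable (fun x : ℝ => (2 * 4^n : ℝ) * x ^ (-(1/2) : ℝ)) volume 0 4 :=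
    (intervalIntegral.intervalIntegrable_rpow' (by norm_num)).const_mul _
  have hm : Measurable fun x : ℝ => x ^ n * (1 / (2 * π) * Real.sqrt ((4 - x) / x)) :=
    (measurable_id.pow_const n).mul (measurable_const.mul
      (Real.continuous_sqrt.measurable.comp
        ((measurable_const.sub measurable_id).div measurable_id)))
  refine hg.mono_fun' hm.aestronglyMeasurable ?_
  · rw [Set.uIoc_of_le (by norm_num : (0:ℝ) ≤ 4)]
    refine (ae_restrict_iff' measurableSet_Ioc).mpr (ae_of_all _ fun x hx => ?_)
    have hx0 : 0 < x := hx.1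
    have hx4 : x ≤ 4 := hx.2
    have hrw : x ^ (-(1/2) : ℝ) = (Real.sqrt x)⁻¹ := by
      rw [Real.rpow_neg hx0.le, ← Real.sqrt_eq_rpow]
    have hsx : 0 < Real.sqrt x := Real.sqrt_pos.mpr hx0
    have hs : Real.sqrt ((4 - x) / x) ≤ 2 * (Real.sqrt x)⁻¹ := by
      have h1 : (4 - x) / x ≤ 4 / x := by gcongr; linarith
      calc Real.sqrt ((4 - x) / x) ≤ Real.sqrt (4 / x) := Real.sqrt_le_sqrt h1
        _ = 2 * (Real.sqrt x)⁻¹ := by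
            rw [Real.sqrt_div (by norm_num : (0:ℝ) ≤ 4) x,
              show (4:ℝ) = 2^2 by norm_num, Real.sqrt_sq (by norm_num : (0:ℝ) ≤ 2),
              div_eq_mul_inv]
    have hxn : x ^ n ≤ (4:ℝ) ^ n := pow_le_pow_left₀ hx0.le hx4 n
    have hc : 1 / (2 * π) ≤ 1 := by
      rw [div_le_one (by positivity)]
      nlinarith [Real.pi_gt_three]
    show ‖x ^ n * (1 / (2 * π) * Real.sqrt ((4 - x) / x))‖ ≤ 2 * 4 ^ n * x ^ (-(1/2) : ℝ)
    rw [Real.norm_eq_abs, abs_of_nonneg (by positivity), hrw]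
    calc x ^ n * (1 / (2 * π) * Real.sqrt ((4 - x) / x))
        ≤ 4 ^ n * (1 * (2 * (Real.sqrt x)⁻¹)) := by
          apply mul_le_mul hxn _ (by positivity) (by positivity)
          exact mul_le_mul hc hs (Real.sqrt_nonneg _) (by norm_num)
      _ = 2 * 4 ^ n * (Real.sqrt x)⁻¹ := by ring

theorem catalan_integral_repr :
    (∀ n : ℕ, (catalan n : ℝ) =
      ∫ x in (0:ℝ)..4, x ^ n * (1 / (2 * π) * Real.sqrt ((4 - x) / x))) ∧
    IsMomentSeqOn (Set.Icc 0 4) (fun n => (catalan n : ℝ)) := by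
  have hpart1 : ∀ n : ℕ, (catalan n : ℝ) =
      ∫ x in (0:ℝ)..4, x ^ n * (1 / (2 * π) * Real.sqrt ((4 - x) / x)) := by
    intro n
    rw [show (∫ x in (0:ℝ)..4, x ^ n * (1 / (2 * π) * Real.sqrt ((4 - x) / x)))
        = ∫ x in (0:ℝ)..4, (1 / (2 * π)) * (x ^ n * Real.sqrt ((4 - x) / x)) from
      intervalIntegral.integral_congr fun x _ => by ring,
      intervalIntegral.integral_const_mul, key]
    field_simp
  refine ⟨hpart1, ?_⟩
  set w : ℝ → ℝ := fun x => 1 / (2 * π) * Real.sqrt ((4 - x) / x) with hw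
  have hw_meas : Measurable fun x => Real.toNNReal (w x) := by
    apply Measurable.real_toNNReal
    exact measurable_const.mul (Real.continuous_sqrt.measurable.comp
      ((measurable_const.sub measurable_id).div measurable_id))
  refine ⟨(volume.restrict (Set.Ioc 0 4)).withDensity
    (fun x => (Real.toNNReal (w x) : ENNReal)), ?_, ?_⟩
  · rw [withDensity_apply _ measurableSet_Icc.compl,
      Measure.restrict_restrict measurableSet_Icc.compl]
    have he : (Set.Icc (0:ℝ) 4)ᶜ ∩ Set.Ioc 0 4 = ∅ := by
      rw [Set.eq_empty_iff_forall_notMem]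
      rintro x ⟨hc, hx⟩
      exact hc ⟨hx.1.le, hx.2⟩
    rw [he]
    simp
  · intro n
    have hIn : IntegrableOn (fun x => x ^ n * w x) (Set.Ioc 0 4) volume :=
      (intervalIntegrable_iff_integrableOn_Ioc_of_le (by norm_num)).mp (integrable_main n)
    have hwnn : ∀ x ∈ Set.Ioc (0:ℝ) 4, 0 ≤ w x := fun x hx => by positivity
    constructor
    · rw [integrable_withDensity_iff (hw_meas.coe_nnreal_ennreal)
        (ae_of_all _ fun x => ENNReal.coe_lt_top)]
      refine hIn.congr ?_
      filter_upwards [ae_restrict_mem measurableSet_Ioc] with x hx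
      rw [ENNReal.coe_toReal, Real.coe_toNNReal _ (hwnn x hx)]
    · rw [integral_withDensity_eq_integral_smul hw_meas]
      have : ∫ x in Set.Ioc (0:ℝ) 4, Real.toNNReal (w x) • x ^ n
          = ∫ x in Set.Ioc (0:ℝ) 4, x ^ n * w x := by
        refine setIntegral_congr_fun measurableSet_Ioc fun x hx => ?_
        rw [NNReal.smul_def, Real.coe_toNNReal _ (hwnn x hx), smul_eq_mul]
        ring
      rw [this, ← intervalIntegral.integral_of_le (by norm_num : (0:ℝ) ≤ 4)]
      exact hpart1 n
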